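/- Let P1, P2, R be positive integers, M1, M2 integers, and u, η real numbers. Suppose h: R × R → C is continuous, 1/P1-periodic in the first variable, 1/P2-periodic in the second variable, and satisfies Π_{r=0}^{R−1} h(x + r u, ω + r η) = e^{2πi(M1 x + M2 ω)} for all (x, ω) ∈ R × R. Then R·P1 divides M1 and R·P2 divides M2. -/

import Mathlib

open Complex Finset

/-- A continuous function `ℝ → ℂ` whose values lie in `2πiℤ` is constant. -/
lemma exists_int_const {d : ℝ → ℂ} (hc : Continuous d)
    (hint : ∀ x, ∃ m : ℤ, d x = m * (2 * Real.pi * Complex.I)) (a b : ℝ) : d a = d b := by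
  have hloc : ∀ x₀ : ℝ, ∀ᶠ x in nhds x₀, d x = d x₀ := by
    intro x₀
    have h1 : ∀ᶠ x in nhds x₀, dist (d x) (d x₀) < 1 :=
      Metric.tendsto_nhds.mp hc.continuousAt 1 one_pos
    filter_upwards [h1] with x hx
    obtain ⟨m, hm⟩ := hint x
    obtain ⟨l, hl⟩ := hint x₀
    rcases eq_or_ne m l with h | h
    · rw [hm, hl, h]
    · exfalso
      have hd : dist (d x) (d x₀) = |((m - l : ℤ) : ℝ)| * (2 * Real.pi) := by
        rw [hm, hl, Complex.dist_eq]
        rw [show (m : ℂ) * (2 * Real.pi * Complex.I) - l * (2 * Real.pi * Complex.I)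
            = (((m - l : ℤ) : ℝ) : ℂ) * (2 * Real.pi : ℝ) * Complex.I by push_cast; ring]
        rw [norm_mul, norm_mul, Complex.norm_I, Complex.norm_real, Complex.norm_real, Real.norm_eq_abs,
          Real.norm_eq_abs, mul_one,
          abs_of_pos (by positivity : (0:ℝ) < 2 * Real.pi)]
      have h1' : (1 : ℝ) ≤ |((m - l : ℤ) : ℝ)| := by
        have : (1 : ℤ) ≤ |m - l| := Int.one_le_abs (by omega)
        exact_mod_cast (by push_cast; exact_mod_cast this : (1:ℝ) ≤ |((m-l:ℤ):ℝ)|)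
      have : (1:ℝ) * (2 * Real.pi) ≤ |((m - l : ℤ) : ℝ)| * (2 * Real.pi) :=
        mul_le_mul_of_nonneg_right h1' (by positivity)
      rw [hd] at hx
      have hpi := Real.pi_gt_three
      linarith
  have hSo : IsOpen {x : ℝ | d x = d b} := by
    rw [isOpen_iff_mem_nhds]
    intro x hx
    filter_upwards [hloc x] with y hy
    show d y = d b
    rw [hy]; exact hx
  have hSc : IsClosed {x : ℝ | d x = d b} := isClosed_eq hc continuous_const
  have huniv : {x : ℝ | d x = d b} = Set.univ :=
    IsClopen.eq_univ ⟨hSc, hSo⟩ ⟨b, rfl⟩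
  have : a ∈ {x : ℝ | d x = d b} := by rw [huniv]; trivial
  exact this

/-- A locally constant `ℤ`-valued function on `ℝ` is constant. -/
lemma int_locally_const {n : ℝ → ℤ}
    (hl : ∀ a : ℝ, ∃ δ > 0, ∀ b : ℝ, |b - a| < δ → n b = n a) (a b : ℝ) : n a = n b := by
  have hSo : IsOpen {x : ℝ | n x = n b} := by
    rw [Metric.isOpen_iff]
    intro x hx
    obtain ⟨δ, hδ, hd⟩ := hl x
    refine ⟨δ, hδ, fun y hy => ?_⟩
    show n y = n b
    rw [hd y (by rw [← Real.dist_eq]; exact Metric.mem_ball.mp hy)]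
    exact hx
  have hSc : IsClosed {x : ℝ | n x = n b} := by
    rw [← isOpen_compl_iff, Metric.isOpen_iff]
    intro x hx
    obtain ⟨δ, hδ, hd⟩ := hl x
    refine ⟨δ, hδ, fun y hy hyS => hx ?_⟩
    rw [Set.mem_setOf_eq] at hyS ⊢
    rw [← hd y (by rw [← Real.dist_eq]; exact Metric.mem_ball.mp hy)]
    exact hyS
  have huniv : {x : ℝ | n x = n b} = Set.univ :=
    IsClopen.eq_univ ⟨hSc, hSo⟩ ⟨b, rfl⟩
  have : a ∈ {x : ℝ | n x = n b} := by rw [huniv]; trivial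
  exact this

lemma re_div_pos {a b : ℂ} (hb : b ≠ 0) (h : ‖a - b‖ < ‖b‖ / 2) :
    0 < (a / b).re := by
  have hb' : 0 < ‖b‖ := norm_pos_iff.mpr hb
  have h1 : ‖a / b - 1‖ < 1 / 2 := by
    rw [show a / b - 1 = (a - b) / b by field_simp, norm_div, div_lt_iff₀ hb']
    linarith
  have h2 : |(a / b - 1).re| ≤ ‖a / b - 1‖ := Complex.abs_re_le_norm _
  have h3 : (a / b - 1).re = (a / b).re - 1 := by simp
  rw [h3] at h2
  have h4 := (abs_le.mp (le_of_lt (lt_of_le_of_lt h2 h1))).1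
  linarith

lemma arg_add_mem_Ioc {z w : ℂ} (hz : 0 < z.re) (hw : 0 < w.re) :
    Complex.arg z + Complex.arg w ∈ Set.Ioc (-Real.pi) Real.pi := by
  have h1 := abs_lt.mp (Complex.abs_arg_lt_pi_div_two_iff.mpr (Or.inl hz))
  have h2 := abs_lt.mp (Complex.abs_arg_lt_pi_div_two_iff.mpr (Or.inl hw))
  exact ⟨by linarith [h1.1, h2.1], by linarith [h1.2, h2.2]⟩

lemma reduce_mod {T : ℝ} (hT : 0 < T) (x : ℝ) : ∃ k : ℤ, 0 ≤ x - k * T ∧ x - k * T ≤ T := by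
  refine ⟨⌊x / T⌋, ?_, ?_⟩
  · have h := Int.floor_le (x / T)
    have := (le_div_iff₀ hT).mp h
    linarith
  · have h := (Int.lt_floor_add_one (x / T)).le
    have := (div_le_iff₀ hT).mp h
    nlinarith

lemma div_mul_div_cancel3 {a b c : ℂ} (ha : a ≠ 0) (hb : b ≠ 0) (hc : c ≠ 0) :
    a / c * (b / a) = b / c := by field_simp

lemma div_div_div_cancel3 {a b c : ℂ} (ha : a ≠ 0) (hb : b ≠ 0) (hc : c ≠ 0) :
    (a / c) / (a / b) = b / c := by field_simp

/-- A continuous, nonvanishing, periodic function `ℝ → ℂ` has a continuous logarithm. -/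
lemma exists_continuous_log {f : ℝ → ℂ} {T : ℝ} (hT : 0 < T) (hf : Continuous f)
    (hnz : ∀ x, f x ≠ 0) (hper : Function.Periodic f T) :
    ∃ g : ℝ → ℂ, Continuous g ∧ ∀ x, f x = Complex.exp (g x) := by
  -- lower bound on |f|
  obtain ⟨xm, hxm, hmin⟩ := isCompact_Icc.exists_isMinOn (s := Set.Icc (0:ℝ) T)
    ⟨0, by simp [hT.le]⟩ ((continuous_norm.comp hf).continuousOn)
  set c := ‖f xm‖ with hcdef
  have hc : 0 < c := norm_pos_iff.mpr (hnz xm)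
  have hlow : ∀ x, c ≤ ‖f x‖ := by
    intro x
    obtain ⟨k, h0, h1⟩ := reduce_mod hT x
    have he : f (x - k * T) = f x := hper.sub_int_mul_eq k
    have := isMinOn_iff.mp hmin (x - k * T) ⟨h0, h1⟩
    simpa [he] using this
  -- uniform continuity
  have huc := (isCompact_Icc (a := (-1:ℝ)) (b := T + 1)).uniformContinuousOn_of_continuous
    hf.continuousOn
  rw [Metric.uniformContinuousOn_iff] at huc
  obtain ⟨δ₀, hδ₀, hδ⟩ := huc (c / 2) (by positivity)
  set δ := min δ₀ 1 with hδdef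
  have hδpos : 0 < δ := lt_min hδ₀ one_pos
  have hclose : ∀ s t : ℝ, |s - t| < δ → ‖f s - f t‖ < c / 2 := by
    intro s t hst
    obtain ⟨k, h0, h1⟩ := reduce_mod hT t
    have het : f (t - k * T) = f t := hper.sub_int_mul_eq k
    have hes : f (s - k * T) = f s := hper.sub_int_mul_eq k
    have habs := abs_lt.mp hst
    have hδ1 : δ ≤ 1 := min_le_right _ _
    have hm1 : t - k * T ∈ Set.Icc (-1:ℝ) (T + 1) := ⟨by linarith, by linarith⟩
    have hm2 : s - k * T ∈ Set.Icc (-1:ℝ) (T + 1) := ⟨by linarith, by linarith⟩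
    have hd : dist (s - k * T) (t - k * T) < δ₀ := by
      rw [Real.dist_eq]
      have : s - k * T - (t - k * T) = s - t := by ring
      rw [this]
      exact lt_of_lt_of_le hst (min_le_left _ _)
    have := hδ _ hm2 _ hm1 hd
    rw [Complex.dist_eq, hes, het] at this
    exact this
  -- mesh size
  obtain ⟨N, hN⟩ := exists_nat_gt (2 / δ)
  have hNpos : 0 < (N : ℝ) := lt_trans (by positivity) hN
  have h2N : 2 / (N : ℝ) < δ := by
    rw [div_lt_iff₀ hNpos]
    have := (div_lt_iff₀ hδpos).mp hN
    nlinarith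
  have hmesh : ∀ s t : ℝ, |s - t| ≤ 2 / (N : ℝ) → ‖f s - f t‖ < c / 2 :=
    fun s t h => hclose s t (lt_of_le_of_lt h h2N)
  have hre : ∀ s t : ℝ, |s - t| ≤ 2 / (N : ℝ) → 0 < (f s / f t).re := by
    intro s t h
    refine re_div_pos (hnz t) (lt_of_lt_of_le (hmesh s t h) ?_)
    have := hlow t
    linarith
  -- the discrete sums
  set L : ℤ → ℂ := fun k => Complex.log (f (((k : ℝ) + 1) / N) / f ((k : ℝ) / N)) with hL
  set B : ℤ → ℂ := fun k => (∑ j ∈ Finset.range k.toNat, L j) -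
      (∑ j ∈ Finset.range (-k).toNat, L (-(j + 1))) with hB
  have hBstep : ∀ k : ℤ, B (k + 1) = B k + L k := by
    intro k
    rcases le_or_gt 0 k with hk | hk
    · have h1 : (k + 1).toNat = k.toNat + 1 := by omega
      have h2 : (-(k + 1)).toNat = 0 := by omega
      have h3 : (-k).toNat = 0 := by omega
      simp only [hB, h1, h2, h3, Finset.sum_range_succ, Finset.range_zero, Finset.sum_empty]
      have h4 : ((k.toNat : ℤ)) = k := Int.toNat_of_nonneg hk
      rw [h4]; ring
    · have h1 : (k + 1).toNat = 0 := by omega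
      have h2 : k.toNat = 0 := by omega
      have h3 : (-k).toNat = (-(k + 1)).toNat + 1 := by omega
      simp only [hB, h1, h2, h3, Finset.sum_range_succ, Finset.range_zero, Finset.sum_empty]
      have h4 : -((((-(k + 1)).toNat : ℤ)) + 1) = k := by omega
      rw [h4]; ring
  have hexpB : ∀ k : ℤ, Complex.exp (B k) = f ((k : ℝ) / N) / f 0 := by
    intro k
    induction k using Int.induction_on with
    | zero =>
      have : B 0 = 0 := by simp [hB]
      rw [this, Complex.exp_zero]
      simp [div_self (hnz 0)]
    | succ k ih =>
      rw [hBstep k, Complex.exp_add, ih, hL]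
      rw [Complex.exp_log (div_ne_zero (hnz _) (hnz _))]
      push_cast
      exact div_mul_div_cancel3 (hnz _) (hnz _) (hnz _)
    | pred k ih =>
      have hst := hBstep (-(k : ℤ) - 1)
      rw [show (-(k : ℤ) - 1) + 1 = -(k : ℤ) by ring] at hst
      have : B (-(k : ℤ) - 1) = B (-(k : ℤ)) - L (-(k : ℤ) - 1) := by rw [hst]; ring
      rw [this, Complex.exp_sub, ih, hL]
      rw [Complex.exp_log (div_ne_zero (hnz _) (hnz _))]
      push_cast
      rw [show (-(k : ℝ) - 1) + 1 = -(k : ℝ) by ring]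
      exact div_div_div_cancel3 (hnz _) (hnz _) (hnz _)
  -- the lift
  set g : ℝ → ℂ := fun x => B ⌊(N : ℝ) * x⌋ +
      Complex.log (f x / f ((⌊(N : ℝ) * x⌋ : ℝ) / N)) + Complex.log (f 0) with hg
  have hexp : ∀ x, f x = Complex.exp (g x) := by
    intro x
    rw [hg]
    simp only
    rw [Complex.exp_add, Complex.exp_add, hexpB, Complex.exp_log (div_ne_zero (hnz _) (hnz _)),
      Complex.exp_log (hnz 0)]
    rw [div_mul_div_cancel3 (hnz _) (hnz _) (hnz _), div_mul_cancel₀ _ (hnz 0)]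
  have hfloor_lt : ∀ x : ℝ, ∀ k : ℤ, (k : ℝ) / N < x → x < ((k : ℝ) + 2) / N →
      |x - (k : ℝ) / N| ≤ 2 / (N : ℝ) := by
    intro x k h1 h2
    have e1 : ((k : ℝ) + 2) / N = (k : ℝ) / N + 2 / N := by ring
    rw [abs_le]
    constructor
    · have : (0:ℝ) ≤ 2 / N := by positivity
      linarith
    · linarith [e1 ▸ h2]
  have hloc : ∀ (k : ℤ) (x : ℝ), (k : ℝ) / N < x → x < ((k : ℝ) + 2) / N →
      g x = B k + Complex.log (f x / f ((k : ℝ) / N)) + Complex.log (f 0) := by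
    intro k x h1 h2
    have hk1 : (k : ℝ) < N * x := by
      rw [div_lt_iff₀ hNpos] at h1; linarith [mul_comm x (N:ℝ)] 
    have hk2 : (N : ℝ) * x < (k : ℝ) + 2 := by
      rw [lt_div_iff₀ hNpos] at h2; linarith [mul_comm x (N:ℝ)]
    have hfl : ⌊(N : ℝ) * x⌋ = k ∨ ⌊(N : ℝ) * x⌋ = k + 1 := by
      have ha : k ≤ ⌊(N : ℝ) * x⌋ := Int.le_floor.mpr hk1.le
      have hb : ⌊(N : ℝ) * x⌋ < k + 2 := Int.floor_lt.mpr (by push_cast; exact hk2)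
      omega
    rcases hfl with hfl | hfl
    · rw [hg]; simp only; rw [hfl]
    · rw [hg]; simp only; rw [hfl]
      have h12 : (1:ℝ) / N ≤ 2 / N := by gcongr; norm_num
      have h1N : (0:ℝ) < 1 / N := by positivity
      have e1 : ((k : ℝ) + 1) / N = (k : ℝ) / N + 1 / N := by ring
      have e2 : ((k : ℝ) + 2) / N = (k : ℝ) / N + 2 / N := by ring
      have dist1 : |((k : ℝ) + 1) / N - (k : ℝ) / N| ≤ 2 / (N : ℝ) := by
        rw [abs_le]; constructor <;> [linarith; linarith]
      have dist2 : |x - ((k : ℝ) + 1) / N| ≤ 2 / (N : ℝ) := by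
        rw [abs_le]; constructor <;> [linarith; linarith]
      have ha : f (((k : ℝ) + 1) / N) / f ((k : ℝ) / N) ≠ 0 := div_ne_zero (hnz _) (hnz _)
      have hb : f x / f (((k : ℝ) + 1) / N) ≠ 0 := div_ne_zero (hnz _) (hnz _)
      have hm := Complex.log_mul ha hb
        (arg_add_mem_Ioc (hre _ _ dist1) (hre _ _ dist2))
      have hab : f (((k : ℝ) + 1) / N) / f ((k : ℝ) / N) * (f x / f (((k : ℝ) + 1) / N))
          = f x / f ((k : ℝ) / N) := div_mul_div_cancel3 (hnz _) (hnz _) (hnz _)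
      rw [hab] at hm
      rw [hBstep k, hL]
      push_cast
      rw [hm]
      ring
  have hcont : Continuous g := by
    rw [continuous_iff_continuousAt]
    intro x₀
    set k : ℤ := ⌈(N : ℝ) * x₀⌉ - 1 with hk
    have hc1 : (k : ℝ) < N * x₀ := by
      have := Int.ceil_lt_add_one ((N : ℝ) * x₀)
      push_cast [hk]
      linarith
    have hc2 : (N : ℝ) * x₀ < (k : ℝ) + 2 := by
      have := Int.le_ceil ((N : ℝ) * x₀)
      push_cast [hk]
      linarith
    have h1 : (k : ℝ) / N < x₀ := by rw [div_lt_iff₀ hNpos]; linarith [mul_comm x₀ (N:ℝ)]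
    have h2 : x₀ < ((k : ℝ) + 2) / N := by rw [lt_div_iff₀ hNpos]; linarith [mul_comm x₀ (N:ℝ)]
    have hmem : f x₀ / f ((k : ℝ) / N) ∈ Complex.slitPlane :=
      Complex.mem_slitPlane_iff.mpr (Or.inl (hre _ _ (hfloor_lt x₀ k h1 h2)))
    have hφ : ContinuousAt (fun x => B k + Complex.log (f x / f ((k : ℝ) / N)) +
        Complex.log (f 0)) x₀ := by
      refine (continuousAt_const.add ?_).add continuousAt_const
      exact (hf.continuousAt.div_const _).clog hmem
    refine hφ.congr ?_
    have hU : Set.Ioo ((k : ℝ) / N) (((k : ℝ) + 2) / N) ∈ nhds x₀ := Ioo_mem_nhds h1 h2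
    filter_upwards [hU] with x hx
    exact (hloc k x hx.1 hx.2).symm
  exact ⟨g, hcont, hexp⟩

lemma key_aux (P R : ℕ) (hP : 0 < P) (hR : 0 < R) (M : ℤ) (c u η : ℝ) (H : ℝ → ℝ → ℂ)
    (hcont : Continuous fun p : ℝ × ℝ => H p.1 p.2)
    (hper : ∀ x ω : ℝ, H (x + 1 / P) ω = H x ω)
    (hprod : ∀ x ω : ℝ, ∏ r ∈ Finset.range R, H (x + r * u) (ω + r * η)
      = Complex.exp (2 * Real.pi * Complex.I * (M * x + c * ω))) :
    ((R : ℤ) * P) ∣ M := by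
  set T : ℝ := 1 / (P : ℝ) with hTdef
  have hT : 0 < T := by positivity
  have hperT : ∀ x ω : ℝ, H (x + T) ω = H x ω := hper
  have hnz : ∀ x ω : ℝ, H x ω ≠ 0 := by
    intro x ω hzero
    apply Complex.exp_ne_zero (2 * Real.pi * Complex.I * (M * x + c * ω))
    rw [← hprod x ω]
    refine Finset.prod_eq_zero (Finset.mem_range.mpr hR) ?_
    simpa using hzero
  have hfcont : ∀ ω : ℝ, Continuous fun x => H x ω :=
    fun ω => hcont.comp (continuous_id.prodMk continuous_const)
  have hfper : ∀ ω : ℝ, Function.Periodic (fun x => H x ω) T := fun ω x => hperT x ω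
  choose g hgc hge using fun ω : ℝ =>
    exists_continuous_log hT (hfcont ω) (fun x => hnz x ω) (hfper ω)
  -- winding integers
  have hn0 : ∀ ω : ℝ, ∃ m : ℤ, ∀ x : ℝ,
      g ω (x + T) - g ω x = m * (2 * Real.pi * Complex.I) := by
    intro ω
    have hd : Continuous (fun x => g ω (x + T) - g ω x) :=
      ((hgc ω).comp (continuous_add_right T)).sub (hgc ω)
    have hint : ∀ x : ℝ, ∃ m : ℤ,
        g ω (x + T) - g ω x = m * (2 * Real.pi * Complex.I) := by
      intro x
      apply Complex.exp_eq_one_iff.mp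
      rw [Complex.exp_sub, ← hge, ← hge, hperT, div_self (hnz x ω)]
    obtain ⟨m, hm⟩ := hint 0
    exact ⟨m, fun x => by rw [exists_int_const hd hint x 0, hm]⟩
  choose n hn using hn0
  -- telescoping to step 1
  have htel : ∀ (ω : ℝ) (m : ℕ) (x : ℝ),
      g ω (x + m * T) - g ω x = (m : ℂ) * ((n ω : ℂ) * (2 * Real.pi * Complex.I)) := by
    intro ω m
    induction m with
    | zero => intro x; simp
    | succ m ih =>
      intro x
      have e : x + ((m : ℝ) + 1) * T = (x + m * T) + T := by ring
      push_cast
      rw [e]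
      linear_combination hn ω (x + m * T) + ih x
  have hPT : (P : ℝ) * T = 1 := by
    rw [hTdef]
    field_simp
  have hstep1 : ∀ (ω x : ℝ),
      g ω (x + 1) - g ω x = (P : ℂ) * ((n ω : ℂ) * (2 * Real.pi * Complex.I)) := by
    intro ω x
    have := htel ω P x
    rw [hPT] at this
    exact this
  -- the product comparison
  have hconst : ∀ ω x y : ℝ,
      (∑ r ∈ Finset.range R, g (ω + r * η) (x + r * u)) -
        2 * Real.pi * Complex.I * ((M : ℂ) * (x : ℝ) + (c : ℝ) * (ω : ℝ)) =
      (∑ r ∈ Finset.range R, g (ω + r * η) (y + r * u)) -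
        2 * Real.pi * Complex.I * ((M : ℂ) * (y : ℝ) + (c : ℝ) * (ω : ℝ)) := by
    intro ω
    apply exists_int_const
    · apply Continuous.sub
      · exact continuous_finset_sum _ fun r _ => (hgc _).comp (continuous_add_right _)
      · exact continuous_const.mul ((continuous_const.mul Complex.continuous_ofReal).add
          continuous_const)
    · intro x
      apply Complex.exp_eq_one_iff.mp
      rw [Complex.exp_sub, Complex.exp_sum]
      have hpe : (∏ r ∈ Finset.range R, Complex.exp (g (ω + r * η) (x + r * u)))
          = Complex.exp (2 * Real.pi * Complex.I * ((M : ℂ) * x + (c : ℝ) * ω)) := by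
        rw [← hprod x ω]
        exact Finset.prod_congr rfl fun r _ => (hge (ω + r * η) (x + r * u)).symm
      rw [hpe, div_self (Complex.exp_ne_zero _)]
  -- locally constant winding
  have hlc : ∀ a : ℝ, ∃ δ > 0, ∀ b : ℝ, |b - a| < δ → n b = n a := by
    intro ω₀
    obtain ⟨xm, hxm, hmin⟩ := isCompact_Icc.exists_isMinOn (s := Set.Icc (0:ℝ) T)
      ⟨0, by simp [hT.le]⟩ ((continuous_norm.comp (hfcont ω₀)).continuousOn)
    set c₀ := ‖H xm ω₀‖ with hc₀def
    have hc₀ : 0 < c₀ := norm_pos_iff.mpr (hnz xm ω₀)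
    have hlow : ∀ x, c₀ ≤ ‖H x ω₀‖ := by
      intro x
      obtain ⟨k, h0, h1⟩ := reduce_mod hT x
      have he : H (x - k * T) ω₀ = H x ω₀ := (hfper ω₀).sub_int_mul_eq k
      have := isMinOn_iff.mp hmin (x - k * T) ⟨h0, h1⟩
      simpa [he] using this
    have huc := ((isCompact_Icc (a := (0:ℝ)) (b := T)).prod
      (isCompact_Icc (a := ω₀ - 1) (b := ω₀ + 1))).uniformContinuousOn_of_continuous
      hcont.continuousOn
    rw [Metric.uniformContinuousOn_iff] at huc
    obtain ⟨δ₀, hδ₀, hδ⟩ := huc (c₀ / 2) (by positivity)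
    refine ⟨min δ₀ 1, lt_min hδ₀ one_pos, ?_⟩
    intro ω hω
    have hω₁ : |ω - ω₀| < δ₀ := lt_of_lt_of_le hω (min_le_left _ _)
    have hω₂ : |ω - ω₀| < 1 := lt_of_lt_of_le hω (min_le_right _ _)
    have habs := abs_lt.mp hω₂
    have hclose : ∀ x : ℝ, ‖H x ω - H x ω₀‖ < c₀ / 2 := by
      intro x
      obtain ⟨k, h0, h1⟩ := reduce_mod hT x
      have e1 : H (x - k * T) ω = H x ω := (hfper ω).sub_int_mul_eq k
      have e2 : H (x - k * T) ω₀ = H x ω₀ := (hfper ω₀).sub_int_mul_eq k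
      have m1 : ((x - k * T, ω) : ℝ × ℝ) ∈ Set.Icc (0:ℝ) T ×ˢ Set.Icc (ω₀ - 1) (ω₀ + 1) :=
        ⟨⟨h0, h1⟩, ⟨by linarith, by linarith⟩⟩
      have m2 : ((x - k * T, ω₀) : ℝ × ℝ) ∈ Set.Icc (0:ℝ) T ×ˢ Set.Icc (ω₀ - 1) (ω₀ + 1) :=
        ⟨⟨h0, h1⟩, ⟨by linarith, by linarith⟩⟩
      have hd : dist ((x - k * T, ω) : ℝ × ℝ) ((x - k * T, ω₀) : ℝ × ℝ) < δ₀ := by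
        rw [Prod.dist_eq]
        apply max_lt
        · simpa using hδ₀
        · rwa [Real.dist_eq]
      have := hδ _ m1 _ m2 hd
      rw [Complex.dist_eq] at this
      simp only at this
      rwa [e1, e2] at this
    set q : ℝ → ℂ := fun x => H x ω / H x ω₀ with hq
    have hqre : ∀ x, 0 < (q x).re := by
      intro x
      refine re_div_pos (hnz x ω₀) (lt_of_lt_of_le (hclose x) ?_)
      have := hlow x
      linarith
    have hq0 : ∀ x, q x ≠ 0 := fun x => div_ne_zero (hnz x ω) (hnz x ω₀)
    have hqc : Continuous q := (hfcont ω).div (hfcont ω₀) fun x => hnz x ω₀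
    set G : ℝ → ℂ := fun x => g ω₀ x + Complex.log (q x) with hG
    have hGc : Continuous G :=
      (hgc ω₀).add (hqc.clog fun x => Complex.mem_slitPlane_iff.mpr (Or.inl (hqre x)))
    have hGe : ∀ x, H x ω = Complex.exp (G x) := by
      intro x
      rw [hG]
      simp only
      rw [Complex.exp_add, ← hge, Complex.exp_log (hq0 x), hq]
      simp only
      rw [mul_div_cancel₀ _ (hnz x ω₀)]
    have hdiff : ∀ x y : ℝ, g ω x - G x = g ω y - G y := by
      apply exists_int_const ((hgc ω).sub hGc)
      intro x
      apply Complex.exp_eq_one_iff.mp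
      rw [Pi.sub_apply, Complex.exp_sub, ← hge, ← hGe, div_self (hnz x ω)]
    have hqper : q (0 + T) = q 0 := by
      rw [hq]
      simp only
      rw [hperT 0 ω, hperT 0 ω₀]
    have hGinc : G (0 + T) - G 0 = (n ω₀ : ℂ) * (2 * Real.pi * Complex.I) := by
      rw [hG]
      simp only
      rw [hqper]
      linear_combination hn ω₀ 0
    have hinc : g ω (0 + T) - g ω 0 = G (0 + T) - G 0 := by
      linear_combination hdiff (0 + T) 0
    have hfin : (n ω : ℂ) * (2 * Real.pi * Complex.I)
        = (n ω₀ : ℂ) * (2 * Real.pi * Complex.I) := by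
      rw [← hn ω 0, hinc, hGinc]
    have := mul_right_cancel₀ Complex.two_pi_I_ne_zero hfin
    exact_mod_cast this
  -- conclude
  set k : ℤ := n 0 with hk
  have hkall : ∀ a : ℝ, n a = k := fun a => int_locally_const hlc a 0
  have hsum : ∑ r ∈ Finset.range R,
      (g ((0 : ℝ) + r * η) ((1 : ℝ) + r * u) - g ((0 : ℝ) + r * η) ((0 : ℝ) + r * u))
      = 2 * Real.pi * Complex.I * (M : ℂ) := by
    have h := hconst 0 1 0
    rw [Finset.sum_sub_distrib]
    push_cast at h ⊢
    linear_combination h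
  have hterm : ∀ r ∈ Finset.range R,
      g ((0 : ℝ) + r * η) ((1 : ℝ) + r * u) - g ((0 : ℝ) + r * η) ((0 : ℝ) + r * u)
      = (P : ℂ) * ((k : ℂ) * (2 * Real.pi * Complex.I)) := by
    intro r _
    rw [show (1 : ℝ) + r * u = ((0 : ℝ) + r * u) + 1 by ring]
    rw [hstep1, hkall]
  rw [Finset.sum_congr rfl hterm, Finset.sum_const, Finset.card_range, nsmul_eq_mul] at hsum
  have hMC : ((R : ℂ) * (P : ℂ) * (k : ℂ)) * (2 * Real.pi * Complex.I)
      = (M : ℂ) * (2 * Real.pi * Complex.I) := by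
    linear_combination hsum
  have hM : (M : ℂ) = ((((R : ℤ) * P * k : ℤ)) : ℂ) := by
    have := mul_right_cancel₀ Complex.two_pi_I_ne_zero hMC
    push_cast
    linear_combination -this
  have hMZ : M = (R : ℤ) * P * k := by exact_mod_cast hM
  exact ⟨k, hMZ⟩

/-- Proposition 3.2: if `h : ℝ × ℝ → ℂ` is continuous, `1/P₁`-periodic in the first
variable, `1/P₂`-periodic in the second, and
`Π_{r=0}^{R-1} h(x + ru, ω + rη) = e^{2πi(M₁x + M₂ω)}` for all `(x,ω)`, then
`RP₁ ∣ M₁` and `RP₂ ∣ M₂`. -/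
theorem key_proposition (P₁ P₂ R : ℕ) (hP₁ : 0 < P₁) (hP₂ : 0 < P₂) (hR : 0 < R)
    (M₁ M₂ : ℤ) (u η : ℝ) (h : ℝ → ℝ → ℂ)
    (hcont : Continuous fun p : ℝ × ℝ => h p.1 p.2)
    (hper₁ : ∀ x ω : ℝ, h (x + 1 / P₁) ω = h x ω)
    (hper₂ : ∀ x ω : ℝ, h x (ω + 1 / P₂) = h x ω)
    (hprod : ∀ x ω : ℝ, ∏ r ∈ Finset.range R, h (x + r * u) (ω + r * η)
      = Complex.exp (2 * Real.pi * Complex.I * (M₁ * x + M₂ * ω))) :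
    ((R : ℤ) * P₁) ∣ M₁ ∧ ((R : ℤ) * P₂) ∣ M₂ := by
  constructor
  · refine key_aux P₁ R hP₁ hR M₁ (M₂ : ℝ) u η h hcont hper₁ ?_
    intro x ω
    rw [hprod x ω]
    norm_cast
  · refine key_aux P₂ R hP₂ hR M₂ (M₁ : ℝ) η u (fun a b => h b a)
      (hcont.comp continuous_swap) (fun a b => hper₂ b a) ?_
    intro x ω
    rw [hprod ω x]
    congr 1
    push_cast
    ring
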